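/- Let f ∈ 𝔪 be a nonzero polynomial and let c = c^𝔪(f) be its F-pure threshold at the origin. Then for every e ∈ ℕ, ν_f(p^e) = ⌈p^e · c⌉ − 1. -/

import Mathlib

open Filter

/-- The `q`-th Frobenius power of an ideal `J`:
the ideal generated by the `q`-th powers of the elements of `J`. -/
def frobeniusPower {R : Type*} [CommSemiring R] (J : Ideal R) (q : ℕ) : Ideal R :=
  Ideal.span ((· ^ q) '' (J : Set R))

/-- `ν_f(p^e)`, the largest `n` with `f ^ n ∉ 𝔪^{[p^e]}`, where `𝔪` is the ideal
generated by the variables.  (The defining set is finite and contains `0`.) -/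
noncomputable def nu (p : ℕ) {m : ℕ} {K : Type*} [Field K]
    (f : MvPolynomial (Fin m) K) (e : ℕ) : ℕ :=
  sSup {n : ℕ |
    f ^ n ∉ frobeniusPower
      (Ideal.span (Set.range (MvPolynomial.X : Fin m → MvPolynomial (Fin m) K))) (p ^ e)}

namespace FptAux

open MvPolynomial


variable {p : ℕ} {m : ℕ} {K : Type*} [Field K]

noncomputable def Iq (m : ℕ) (K : Type*) [Field K] (q : ℕ) : Ideal (MvPolynomial (Fin m) K) :=
  Ideal.span (Set.range fun i : Fin m => (X i : MvPolynomial (Fin m) K) ^ q)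

lemma mem_Iq_iff (q : ℕ) (g : MvPolynomial (Fin m) K) :
    g ∈ Iq m K q ↔ ∀ d ∈ g.support, ∃ i, q ≤ d i := by
  have himg : (Set.range fun i : Fin m => (X i : MvPolynomial (Fin m) K) ^ q)
      = (fun s => monomial s (1 : K)) '' (Set.range fun i : Fin m => Finsupp.single i q) := by
    rw [← Set.range_comp]; simp only [X_pow_eq_monomial]; rfl
  rw [Iq, himg, mem_ideal_span_monomial_image]
  constructor
  · intro h d hd
    obtain ⟨si, ⟨i, rfl⟩, hle⟩ := h d hd
    exact ⟨i, Finsupp.single_le_iff.mp hle⟩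
  · intro h d hd
    obtain ⟨i, hi⟩ := h d hd
    exact ⟨Finsupp.single i q, ⟨i, rfl⟩, Finsupp.single_le_iff.mpr hi⟩

lemma frobeniusPower_m_eq (hp : p.Prime) [CharP K p] (e : ℕ) :
    Ideal.span ((· ^ p ^ e) ''
        ((Ideal.span (Set.range (X : Fin m → MvPolynomial (Fin m) K)) : Ideal _) : Set _))
      = Iq m K (p ^ e) := by
  haveI := Fact.mk hp
  apply le_antisymm
  · rw [Ideal.span_le]
    rintro _ ⟨g, hg, rfl⟩
    induction hg using Submodule.span_induction with
    | mem x hx =>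
      obtain ⟨i, rfl⟩ := hx
      exact Ideal.subset_span ⟨i, rfl⟩
    | zero => simp [zero_pow (pow_ne_zero e hp.ne_zero), Ideal.zero_mem]
    | add a b _ _ ha hb =>
      show (a + b) ^ p ^ e ∈ _
      rw [add_pow_char_pow]
      exact Ideal.add_mem _ ha hb
    | smul r a _ ha =>
      show (r • a) ^ p ^ e ∈ _
      rw [smul_eq_mul, mul_pow]
      exact Ideal.mul_mem_left _ _ ha
  · rw [Iq, Ideal.span_le]
    rintro _ ⟨i, rfl⟩
    exact Ideal.subset_span ⟨X i, Ideal.subset_span ⟨i, rfl⟩, rfl⟩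

lemma pow_pow_char_eq (hp : p.Prime) [CharP K p] (e : ℕ) (g : MvPolynomial (Fin m) K) :
    g ^ p ^ e = ∑ d ∈ g.support, monomial (p ^ e • d) ((g.coeff d) ^ p ^ e) := by
  haveI := Fact.mk hp
  conv_lhs => rw [← support_sum_monomial_coeff g]
  rw [← iterateFrobenius_def (R := MvPolynomial (Fin m) K) (p := p) (n := e), map_sum]
  refine Finset.sum_congr rfl fun d hd => ?_
  rw [iterateFrobenius_def, monomial_pow]


lemma smul_finsupp_inj {q : ℕ} (hq : q ≠ 0) {d a : Fin m →₀ ℕ} (h : q • d = q • a) : d = a := by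
  ext i
  have := congrArg (fun v : Fin m →₀ ℕ => v i) h
  simp only [Finsupp.smul_apply, smul_eq_mul] at this
  exact Nat.eq_of_mul_eq_mul_left (Nat.pos_of_ne_zero hq) this

lemma coeff_pow_char_smul (hp : p.Prime) [CharP K p] (e : ℕ) (g : MvPolynomial (Fin m) K)
    (a : Fin m →₀ ℕ) : (g ^ p ^ e).coeff (p ^ e • a) = (g.coeff a) ^ p ^ e := by
  have hq : (p ^ e : ℕ) ≠ 0 := pow_ne_zero e hp.ne_zero
  rw [pow_pow_char_eq hp e g]
  rw [coeff_sum]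
  simp only [coeff_monomial]
  by_cases ha : a ∈ g.support
  · rw [Finset.sum_eq_single a]
    · simp
    · intro d hd hda
      rw [if_neg]
      intro hEq
      exact hda (smul_finsupp_inj hq hEq)
    · intro h; exact absurd ha h
  · rw [Finset.sum_eq_zero, notMem_support_iff.mp ha, zero_pow hq]
    intro d hd
    rw [if_neg]
    intro hEq
    exact ha ((smul_finsupp_inj hq hEq) ▸ hd)

lemma mem_support_pow_char (hp : p.Prime) [CharP K p] (e : ℕ) (g : MvPolynomial (Fin m) K)
    (u : Fin m →₀ ℕ) (hu : u ∈ (g ^ p ^ e).support) : ∃ d ∈ g.support, u = p ^ e • d := by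
  rw [pow_pow_char_eq hp e g] at hu
  have := mem_support_iff.mp hu
  rw [coeff_sum] at this
  obtain ⟨d, hd, hne⟩ := Finset.exists_ne_zero_of_sum_ne_zero this
  rw [coeff_monomial] at hne
  by_cases h : p ^ e • d = u
  · exact ⟨d, hd, h.symm⟩
  · rw [if_neg h] at hne
    exact absurd rfl hne

lemma FP_eq (hp : p.Prime) [CharP K p] (e : ℕ) :
    frobeniusPower (Ideal.span (Set.range (X : Fin m → MvPolynomial (Fin m) K))) (p ^ e)
      = Iq m K (p ^ e) := by
  rw [frobeniusPower]
  exact frobeniusPower_m_eq hp e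

variable [CharP K p] {f : MvPolynomial (Fin m) K}

lemma nu_eq_sSup (hp : p.Prime) (e : ℕ) :
    nu p f e = sSup {n : ℕ | f ^ n ∉ Iq m K (p ^ e)} := by
  rw [nu, FP_eq hp]

lemma sum_support_pow_ge
    (hfm : f ∈ Ideal.span (Set.range (X : Fin m → MvPolynomial (Fin m) K))) (n : ℕ) :
    ∀ d ∈ (f ^ n).support, n ≤ ∑ i, d i := by
  induction n with
  | zero => intro d _; exact Nat.zero_le _
  | succ n ih =>
    intro d hd
    rw [pow_succ] at hd
    obtain ⟨d1, hd1, d2, hd2, rfl⟩ := Finset.mem_add.mp (MvPolynomial.support_mul _ _ hd)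
    have h2 : 1 ≤ ∑ i, d2 i := by
      rw [← Set.image_univ] at hfm
      obtain ⟨i, _, hi⟩ := (mem_ideal_span_X_image.mp hfm) d2 hd2
      calc 1 ≤ d2 i := Nat.one_le_iff_ne_zero.mpr hi
        _ ≤ ∑ j, d2 j := Finset.single_le_sum (fun _ _ => Nat.zero_le _) (Finset.mem_univ i)
    have : ∑ i, (d1 + d2) i = (∑ i, d1 i) + ∑ i, d2 i := by
      simp [Finsupp.add_apply, Finset.sum_add_distrib]
    rw [this]
    have := ih d1 hd1
    omega

lemma pow_mem_of_big
    (hfm : f ∈ Ideal.span (Set.range (X : Fin m → MvPolynomial (Fin m) K)))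
    {q n : ℕ} (hq : 0 < q) (hn : m * (q - 1) < n) : f ^ n ∈ Iq m K q := by
  rw [mem_Iq_iff]
  intro d hd
  by_contra hcon
  push_neg at hcon
  have hsum : ∑ i, d i ≤ m * (q - 1) := by
    calc ∑ i, d i ≤ ∑ _i : Fin m, (q - 1) :=
          Finset.sum_le_sum (fun i _ => by have := hcon i; omega)
      _ = m * (q - 1) := by simp [Finset.sum_const, mul_comm]
  have := sum_support_pow_ge hfm n d hd
  omega

lemma pow_mem_of_le {q n n' : ℕ} (h : n ≤ n') (hn : f ^ n ∈ Iq m K q) : f ^ n' ∈ Iq m K q := by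
  have : f ^ n' = f ^ n * f ^ (n' - n) := by rw [← pow_add]; congr 1; omega
  rw [this]
  exact Ideal.mul_mem_right _ _ hn

lemma zero_mem_S (hp : p.Prime) (e : ℕ) : f ^ 0 ∉ Iq m K (p ^ e) := by
  rw [pow_zero, mem_Iq_iff]
  push_neg
  have hq : 0 < p ^ e := pow_pos hp.pos e
  refine ⟨0, ?_, fun i => by simpa using hq⟩
  rw [MvPolynomial.mem_support_iff]
  simp

lemma bddAbove_S (hp : p.Prime)
    (hfm : f ∈ Ideal.span (Set.range (X : Fin m → MvPolynomial (Fin m) K))) (e : ℕ) :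
    BddAbove {n : ℕ | f ^ n ∉ Iq m K (p ^ e)} := by
  refine ⟨m * (p ^ e - 1), fun n hn => ?_⟩
  by_contra hcon
  exact hn (pow_mem_of_big hfm (pow_pos hp.pos e) (by omega))

lemma nu_not_mem (hp : p.Prime)
    (hfm : f ∈ Ideal.span (Set.range (X : Fin m → MvPolynomial (Fin m) K))) (e : ℕ) :
    f ^ (nu p f e) ∉ Iq m K (p ^ e) := by
  rw [nu_eq_sSup hp]
  exact Nat.sSup_mem ⟨0, zero_mem_S hp e⟩ (bddAbove_S hp hfm e)

lemma nu_succ_mem (hp : p.Prime)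
    (hfm : f ∈ Ideal.span (Set.range (X : Fin m → MvPolynomial (Fin m) K))) (e : ℕ) :
    f ^ (nu p f e + 1) ∈ Iq m K (p ^ e) := by
  by_contra h
  have hle : nu p f e + 1 ≤ nu p f e := by
    conv_rhs => rw [nu_eq_sSup hp]
    exact le_csSup (bddAbove_S hp hfm e) h
  omega

lemma le_nu_of_not_mem (hp : p.Prime)
    (hfm : f ∈ Ideal.span (Set.range (X : Fin m → MvPolynomial (Fin m) K)))
    {e n : ℕ} (h : f ^ n ∉ Iq m K (p ^ e)) : n ≤ nu p f e := by
  rw [nu_eq_sSup hp]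
  exact le_csSup (bddAbove_S hp hfm e) h

lemma pow_p_mem_Iq (hp : p.Prime) (e : ℕ) {g : MvPolynomial (Fin m) K}
    (hg : g ∈ Iq m K (p ^ e)) : g ^ p ∈ Iq m K (p ^ (e + 1)) := by
  haveI := Fact.mk hp
  induction hg using Submodule.span_induction with
  | mem x hx =>
    obtain ⟨i, rfl⟩ := hx
    refine Ideal.subset_span ⟨i, ?_⟩
    rw [← pow_mul, pow_succ]
  | zero => rw [zero_pow hp.ne_zero]; exact Ideal.zero_mem _
  | add a b _ _ ha hb =>
    show (a + b) ^ p ∈ _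
    rw [add_pow_char]
    exact Ideal.add_mem _ ha hb
  | smul r a _ ha =>
    show (r • a) ^ p ∈ _
    rw [smul_eq_mul, mul_pow]
    exact Ideal.mul_mem_left _ _ ha

lemma nu_succ_le (hp : p.Prime)
    (hfm : f ∈ Ideal.span (Set.range (X : Fin m → MvPolynomial (Fin m) K))) (e : ℕ) :
    nu p f (e + 1) + 1 ≤ p * (nu p f e + 1) := by
  by_contra hcon
  push_neg at hcon
  have h1 : f ^ (p * (nu p f e + 1)) ∈ Iq m K (p ^ (e + 1)) := by
    have := pow_p_mem_Iq hp e (nu_succ_mem hp hfm e)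
    rwa [← pow_mul, mul_comm] at this
  exact nu_not_mem hp hfm (e + 1) (pow_mem_of_le (by omega) h1)

lemma nu_key (hp : p.Prime) (hf0 : f ≠ 0)
    (hfm : f ∈ Ideal.span (Set.range (X : Fin m → MvPolynomial (Fin m) K)))
    {e' : ℕ} (hbig : ∀ d ∈ f.support, ∀ i, d i < p ^ e') (E : ℕ) :
    p ^ e' * nu p f E + 1 ≤ nu p f (E + e') := by
  set q' := p ^ e' with hq'def
  have hq'pos : 0 < q' := pow_pos hp.pos e'
  -- a witness monomial of f ^ nu p f E with all exponents < p ^ E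
  have hnm := nu_not_mem hp hfm E
  rw [mem_Iq_iff] at hnm
  push_neg at hnm
  obtain ⟨a, ha, haE⟩ := hnm
  -- a witness monomial of f
  obtain ⟨b, hb⟩ := (MvPolynomial.support_nonempty.mpr hf0)
  set g := f ^ nu p f E with hgdef
  set t : Fin m →₀ ℕ := q' • a + b with htdef
  -- the coefficient of t in g ^ q' * f
  have hcoeff : (g ^ q' * f).coeff t = (g.coeff a) ^ q' * f.coeff b := by
    rw [MvPolynomial.coeff_mul]
    refine Finset.sum_eq_single_of_mem (q' • a, b) (Finset.HasAntidiagonal.mem_antidiagonal.mpr rfl) ?_ |>.trans ?_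
    · rintro ⟨u, v⟩ huv hne
      have huv' : u + v = t := Finset.HasAntidiagonal.mem_antidiagonal.mp huv
      by_contra hnz
      have hu : (g ^ q').coeff u ≠ 0 := fun h => hnz (by simp [h])
      have hv : f.coeff v ≠ 0 := fun h => hnz (by simp [h])
      obtain ⟨w, _, rfl⟩ := mem_support_pow_char hp e' g u (mem_support_iff.mpr hu)
      have hvlt : ∀ i, v i < q' := hbig v (mem_support_iff.mpr hv)
      have hkey : ∀ i, w i = a i ∧ v i = b i := by
        intro i
        have hEq : q' * w i + v i = q' * a i + b i := by
          have := congrArg (fun z : Fin m →₀ ℕ => z i) huv'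
          simpa [htdef, Finsupp.add_apply, Finsupp.smul_apply, mul_comm] using this
        have hblt : b i < q' := hbig b hb i
        have hv' : v i < q' := hvlt i
        have hvb : v i = b i := by
          have h1 : (q' * w i + v i) % q' = v i := by
            rw [Nat.mul_add_mod, Nat.mod_eq_of_lt hv']
          have h2 : (q' * a i + b i) % q' = b i := by
            rw [Nat.mul_add_mod, Nat.mod_eq_of_lt hblt]
          rw [hEq, h2] at h1
          exact h1.symm
        refine ⟨?_, hvb⟩
        have : q' * w i = q' * a i := by omega
        exact Nat.eq_of_mul_eq_mul_left hq'pos this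
      have hw : w = a := Finsupp.ext fun i => (hkey i).1
      have hvb : v = b := Finsupp.ext fun i => (hkey i).2
      exact hne (by rw [hw, hvb])
    · rw [coeff_pow_char_smul hp]
  have hcne : (g ^ q' * f).coeff t ≠ 0 := by
    rw [hcoeff]
    exact mul_ne_zero (pow_ne_zero _ (mem_support_iff.mp ha)) (mem_support_iff.mp hb)
  -- conclude non-membership
  have hpowEq : f ^ (q' * nu p f E + 1) = g ^ q' * f := by
    rw [hgdef, ← pow_mul, ← pow_succ, mul_comm]
  have hnotmem : f ^ (q' * nu p f E + 1) ∉ Iq m K (p ^ (E + e')) := by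
    rw [mem_Iq_iff]
    push_neg
    refine ⟨t, ?_, fun i => ?_⟩
    · rw [hpowEq]; exact mem_support_iff.mpr hcne
    · have h1 : a i < p ^ E := haE i
      have h2 : b i < q' := hbig b hb i
      have ht : t i = q' * a i + b i := by
        simp [htdef, Finsupp.add_apply, Finsupp.smul_apply, mul_comm]
      rw [ht, pow_add, mul_comm (p ^ E) q']
      nlinarith
  exact le_nu_of_not_mem hp hfm hnotmem

lemma exists_big (hp : p.Prime) (f : MvPolynomial (Fin m) K) :
    ∃ e' : ℕ, 0 < e' ∧ ∀ d ∈ f.support, ∀ i, d i < p ^ e' := by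
  set B := f.support.sup (fun d => ∑ i, d i) with hB
  refine ⟨B + 1, Nat.succ_pos _, fun d hd i => ?_⟩
  have h1 : d i ≤ ∑ j, d j := Finset.single_le_sum (fun _ _ => Nat.zero_le _) (Finset.mem_univ i)
  have h2 : ∑ j, d j ≤ B := Finset.le_sup (f := fun d : Fin m →₀ ℕ => ∑ i, d i) hd
  have h3 : B < p ^ B := Nat.lt_pow_self hp.one_lt
  have h4 : p ^ B ≤ p ^ (B + 1) := Nat.pow_le_pow_right hp.pos (by omega)
  omega

theorem nu_eq_ceil_sub_one'
    (hp : p.Prime) [Fintype K]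
    (hf0 : f ≠ 0)
    (hfm : f ∈ Ideal.span (Set.range (MvPolynomial.X : Fin m → MvPolynomial (Fin m) K)))
    (c : ℝ)
    (hc : Tendsto (fun e : ℕ => (nu p f e : ℝ) / (p : ℝ) ^ e) atTop (nhds c)) :
    ∀ e : ℕ, (nu p f e : ℤ) = ⌈(p : ℝ) ^ e * c⌉ - 1 := by
  intro e
  have hppos : (0:ℝ) < p := by exact_mod_cast hp.pos
  have hqpos : ∀ k : ℕ, (0:ℝ) < (p:ℝ) ^ k := fun k => pow_pos hppos k
  set b : ℕ → ℝ := fun k => (nu p f k : ℝ) / (p:ℝ) ^ k with hbdef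
  set a : ℕ → ℝ := fun k => ((nu p f k : ℝ) + 1) / (p:ℝ) ^ k with hadef
  -- upper bound: c ≤ a k for every k
  have hstep : ∀ k, (nu p f (k+1) : ℝ) + 1 ≤ p * ((nu p f k : ℝ) + 1) := by
    intro k
    exact_mod_cast nu_succ_le hp hfm k
  have hanti : ∀ k, a (k+1) ≤ a k := by
    intro k
    rw [hadef]
    simp only []
    rw [div_le_div_iff₀ (hqpos _) (hqpos _)]
    calc ((nu p f (k+1):ℝ)+1) * (p:ℝ)^k ≤ ((p:ℝ) * ((nu p f k:ℝ)+1)) * (p:ℝ)^k := by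
          nlinarith [hqpos k, hstep k]
      _ = ((nu p f k:ℝ)+1) * (p:ℝ)^(k+1) := by ring
  have hanti' : ∀ j k, k ≤ j → a j ≤ a k := by
    intro j k h
    induction j, h using Nat.le_induction with
    | base => exact le_refl _
    | succ n hn ih => exact (hanti n).trans ih
  have hta : Tendsto a atTop (nhds c) := by
    have h0 : Tendsto (fun k : ℕ => ((1:ℝ)/p)^k) atTop (nhds 0) :=
      tendsto_pow_atTop_nhds_zero_of_lt_one (by positivity)
        (by rw [div_lt_one hppos]; exact_mod_cast hp.one_lt)
    have heq : a = fun k => (nu p f k : ℝ) / (p:ℝ)^k + ((1:ℝ)/p)^k := by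
      funext k
      rw [hadef]
      simp only [div_pow, one_pow]
      rw [add_div]
    rw [heq]
    simpa using hc.add h0
  have hc_le : ∀ k, c ≤ a k := fun k =>
    le_of_tendsto hta (Filter.eventually_atTop.mpr ⟨k, fun j hj => hanti' j k hj⟩)
  -- lower bound: b e < c
  obtain ⟨e', he'pos, hbig⟩ := exists_big hp f
  have hkey : ∀ E, b E + 1/(p:ℝ)^(E+e') ≤ b (E+e') := by
    intro E
    have h' : ((p:ℝ)^e' * (nu p f E:ℝ) + 1) ≤ (nu p f (E+e') : ℝ) := by
      exact_mod_cast nu_key hp hf0 hfm hbig E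
    have heq : b E = ((p:ℝ)^e' * (nu p f E : ℝ))/(p:ℝ)^(E+e') := by
      rw [hbdef]
      simp only []
      rw [pow_add]
      field_simp
    rw [heq, hbdef]
    simp only []
    rw [← add_div, div_le_div_iff₀ (hqpos _) (hqpos _)]
    nlinarith [hqpos (E+e'), h']
  have hchain : ∀ k, 1 ≤ k → b (e + e') ≤ b (e + k * e') := by
    intro k hk
    induction k, hk using Nat.le_induction with
    | base => rw [one_mul]
    | succ n hn ih =>
      have h := hkey (e + n * e')
      have harr : e + (n+1) * e' = (e + n*e') + e' := by ring
      calc b (e+e') ≤ b (e + n*e') := ih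
        _ ≤ b (e + n*e') + 1/(p:ℝ)^((e+n*e')+e') := le_add_of_nonneg_right (by positivity)
        _ ≤ b ((e+n*e')+e') := h
        _ = b (e + (n+1)*e') := by rw [harr]
  have hidx : Tendsto (fun k : ℕ => e + k * e') atTop atTop := by
    apply tendsto_atTop_mono (fun k => ?_) tendsto_id
    calc (k : ℕ) = k * 1 := (mul_one k).symm
      _ ≤ k * e' := Nat.mul_le_mul_left k he'pos
      _ ≤ e + k * e' := Nat.le_add_left _ _
  have hcomp : Tendsto (fun k => b (e + k * e')) atTop (nhds c) := hc.comp hidx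
  have hlb : b (e + e') ≤ c :=
    ge_of_tendsto hcomp (Filter.eventually_atTop.mpr ⟨1, fun k hk => hchain k hk⟩)
  have hlt : b e < c := by
    have h1 : b e < b e + 1/(p:ℝ)^(e+e') := lt_add_of_pos_right _ (by positivity)
    linarith [hkey e, hlb]
  -- conclude
  have h1 : (nu p f e : ℝ) < (p:ℝ)^e * c := by
    have := (div_lt_iff₀ (hqpos e)).mp hlt
    linarith [this]
  have h2 : (p:ℝ)^e * c ≤ (nu p f e : ℝ) + 1 := by
    have := hc_le e
    rw [hadef] at this
    simp only [] at this
    have := (le_div_iff₀ (hqpos e)).mp this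
    linarith [this]
  have hceil : ⌈(p:ℝ)^e * c⌉ = (nu p f e : ℤ) + 1 := by
    rw [Int.ceil_eq_iff]
    constructor
    · push_cast
      linarith
    · push_cast
      linarith
  rw [hceil]
  ring

end FptAux

/-- If `c` is the F-pure threshold of `f` at the origin, then
`ν_f(p^e) = ⌈p^e · c⌉ - 1` for every `e`. -/
theorem nu_eq_ceil_sub_one
    (p : ℕ) (hp : p.Prime) (K : Type*) [Field K] [Fintype K] [CharP K p]
    (m : ℕ) (f : MvPolynomial (Fin m) K) (hf0 : f ≠ 0)
    (hfm : f ∈ Ideal.span (Set.range (MvPolynomial.X : Fin m → MvPolynomial (Fin m) K)))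
    (c : ℝ)
    (hc : Tendsto (fun e : ℕ => (nu p f e : ℝ) / (p : ℝ) ^ e) atTop (nhds c)) :
    ∀ e : ℕ, (nu p f e : ℤ) = ⌈(p : ℝ) ^ e * c⌉ - 1 :=
  FptAux.nu_eq_ceil_sub_one' hp hf0 hfm c hc
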